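/- If σ is a near-perfect permutation of order n ≡ 1 (mod 3), i.e., f_σ(δ) ∈ {a, a+2} for all δ ∈ {1,...,n−1} where a = (n(n+1)−2)/3, then the circulant Latin square L[i][j] = (i + σ⁻¹(j)) mod n satisfies imbalance3(L) = 4n(n−1)/3, i.e., I(L) = 4n(n−1)/9 exactly, which attains the lower bound. -/
import Mathlib

open Finset

variable {n : ℕ}

/-- Shift correlation of a permutation of `ZMod n`. -/
def shiftCorr [NeZero n] (σ : Equiv.Perm (ZMod n)) (δ : ZMod n) : ℤ :=
  ∑ j : ZMod n, |((σ (j + δ)).val : ℤ) - ((σ j).val : ℤ)|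

/-- Column of symbol `s` in row `r` of the circulant Latin square
`L i j = i + σ⁻¹ j`: the inverse of the row bijection `j ↦ r + σ.symm j`. -/
def circPos (σ : Equiv.Perm (ZMod n)) (r s : ZMod n) : ZMod n :=
  (σ.symm.trans (Equiv.addLeft r)).symm s

/-- Row-pair distance of the circulant Latin square `L i j = i + σ⁻¹ j`. -/
def circDist [NeZero n] (σ : Equiv.Perm (ZMod n)) (r₁ r₂ : ZMod n) : ℤ :=
  ∑ s : ZMod n, |((circPos σ r₁ s).val : ℤ) - ((circPos σ r₂ s).val : ℤ)|

/-- `3·I(L)` for the circulant Latin square built from `σ`. -/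
def circImbalance3 [NeZero n] (σ : Equiv.Perm (ZMod n)) : ℤ :=
  ∑ p ∈ Finset.univ.filter (fun p : ZMod n × ZMod n => p.1.val < p.2.val),
    |3 * circDist σ p.1 p.2 - (n : ℤ) * ((n : ℤ) + 1)|

lemma circPos_eq (σ : Equiv.Perm (ZMod n)) (r s : ZMod n) :
    circPos σ r s = σ (s - r) := by
  simp [circPos, Equiv.symm_trans_apply, sub_eq_neg_add]

lemma circDist_eq [NeZero n] (σ : Equiv.Perm (ZMod n)) (r₁ r₂ : ZMod n) :
    circDist σ r₁ r₂ = shiftCorr σ (r₁ - r₂) := by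
  unfold circDist shiftCorr
  simp only [circPos_eq]
  refine Fintype.sum_equiv (Equiv.addLeft r₁).symm _ _ fun s => ?_
  rw [abs_sub_comm]
  congr 2 <;> congr 1 <;> simp [Equiv.addLeft] <;> ring

lemma shiftCorr_neg [NeZero n] (σ : Equiv.Perm (ZMod n)) (δ : ZMod n) :
    shiftCorr σ (-δ) = shiftCorr σ δ := by
  unfold shiftCorr
  refine Fintype.sum_equiv (Equiv.addLeft δ).symm _ _ fun j => ?_
  rw [abs_sub_comm]
  congr 2 <;> congr 1 <;> simp [Equiv.addLeft] <;> ring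

lemma shiftCorr_zero [NeZero n] (σ : Equiv.Perm (ZMod n)) : shiftCorr σ 0 = 0 := by
  simp [shiftCorr]

lemma zmod_sum_val [NeZero n] (f : ℕ → ℤ) :
    ∑ x : ZMod n, f (ZMod.val x) = ∑ i ∈ Finset.range n, f i := by
  refine Finset.sum_nbij' (fun x => ZMod.val x) (fun i => (i : ZMod n)) ?_ ?_ ?_ ?_ ?_
  · intro x _; exact Finset.mem_range.mpr (ZMod.val_lt x)
  · intro i _; exact Finset.mem_univ _
  · intro x _; exact ZMod.natCast_zmod_val x
  · intro i hi; exact ZMod.val_cast_of_lt (Finset.mem_range.mp hi)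
  · intro x _; rfl

lemma gauss (m : ℕ) : 2 * ∑ i ∈ Finset.range m, (i : ℤ) = m * (m - 1) := by
  induction m with
  | zero => simp
  | succ m ih =>
    rw [Finset.sum_range_succ]
    push_cast
    push_cast at ih
    linear_combination ih

lemma S3 (m : ℕ) :
    3 * ∑ i ∈ Finset.range m, ∑ j ∈ Finset.range m, |(i : ℤ) - j| =
      (m : ℤ) ^ 3 - m := by
  induction m with
  | zero => simp
  | succ m ih =>
    have habs : ∀ i ∈ Finset.range m, |(i : ℤ) - m| = (m : ℤ) - i := by
      intro i hi
      rw [abs_sub_comm, abs_of_nonneg]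
      have := Finset.mem_range.mp hi
      omega
    have hrow : ∑ i ∈ Finset.range m, |(i : ℤ) - m| = (m:ℤ) * m - ∑ i ∈ Finset.range m, (i:ℤ) := by
      rw [Finset.sum_congr rfl habs, Finset.sum_sub_distrib, Finset.sum_const, Finset.card_range]
      ring
    have hrow2 : ∑ j ∈ Finset.range m, |(m : ℤ) - j| = (m:ℤ) * m - ∑ i ∈ Finset.range m, (i:ℤ) := by
      rw [← hrow]; exact Finset.sum_congr rfl fun j _ => (abs_sub_comm _ _)
    have expand : ∑ i ∈ Finset.range (m+1), ∑ j ∈ Finset.range (m+1), |(i : ℤ) - j| =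
        (∑ i ∈ Finset.range m, ∑ j ∈ Finset.range m, |(i : ℤ) - j|)
        + 2 * ((m:ℤ) * m - ∑ i ∈ Finset.range m, (i:ℤ)) := by
      rw [Finset.sum_range_succ]
      simp only [Finset.sum_range_succ]
      rw [Finset.sum_add_distrib, hrow, hrow2]
      simp; ring
    rw [expand]
    have g := gauss m
    push_cast
    push_cast at ih g
    linear_combination ih - 3*g

lemma total_sum [NeZero n] (σ : Equiv.Perm (ZMod n)) :
    3 * ∑ δ : ZMod n, shiftCorr σ δ = (n : ℤ) ^ 3 - n := by
  have step1 : ∑ δ : ZMod n, shiftCorr σ δ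
      = ∑ w : ZMod n, ∑ v : ZMod n, |((v.val : ℤ)) - (w.val : ℤ)| := by
    unfold shiftCorr
    rw [Finset.sum_comm]
    refine Fintype.sum_equiv σ _ _ fun j => ?_
    refine Fintype.sum_equiv ((Equiv.addLeft j).trans σ) _ _ fun δ => ?_
    simp [Equiv.addLeft]
  rw [step1]
  have : ∑ w : ZMod n, ∑ v : ZMod n, |((v.val : ℤ)) - (w.val : ℤ)|
      = ∑ j ∈ Finset.range n, ∑ i ∈ Finset.range n, |(i : ℤ) - j| := by
    rw [← zmod_sum_val (fun j => ∑ i ∈ Finset.range n, |(i : ℤ) - j|)]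
    refine Finset.sum_congr rfl fun w _ => ?_
    exact zmod_sum_val (fun i => |(i : ℤ) - (w.val : ℤ)|)
  rw [this, Finset.sum_comm]
  exact S3 n

theorem nearPP_attains_bound [NeZero n] (hn : n % 3 = 1) (σ : Equiv.Perm (ZMod n))
    (hf : ∀ δ : ZMod n, δ ≠ 0 →
      shiftCorr σ δ = ((n : ℤ) * ((n : ℤ) + 1) - 2) / 3 ∨
      shiftCorr σ δ = ((n : ℤ) * ((n : ℤ) + 1) - 2) / 3 + 2) :
    3 * circImbalance3 σ = 4 * (n : ℤ) * ((n : ℤ) - 1) := by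
  set N : ℤ := (n : ℤ) with hN
  -- divisibility
  obtain ⟨k, hk⟩ : ∃ k, n = 3 * k + 1 := ⟨n / 3, by omega⟩
  have hdvd : (3 : ℤ) ∣ N * (N + 1) - 2 := ⟨3 * k ^ 2 + 3 * k, by rw [hN, hk]; push_cast; ring⟩
  have h3a : 3 * ((N * (N + 1) - 2) / 3) = N * (N + 1) - 2 := Int.mul_ediv_cancel' hdvd
  set g : ZMod n → ℤ := fun δ => shiftCorr σ δ with hg
  set h : ZMod n → ℤ := fun δ => |3 * g δ - N * (N + 1)| with hh
  have key : ∀ δ : ZMod n, δ ≠ 0 → 3 * h δ = 3 * g δ - N * (N + 1) + 8 := by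
    intro δ hδ
    rcases hf δ hδ with h1 | h1
    · have : 3 * g δ - N * (N + 1) = -2 := by
        simp only [hg]; rw [h1]; linarith [h3a]
      simp only [hh, this]; norm_num
    · have : 3 * g δ - N * (N + 1) = 4 := by
        simp only [hg]; rw [h1]; linarith [h3a]
      simp only [hh, this]; norm_num
  have hsymm : ∀ δ : ZMod n, h (-δ) = h δ := by
    intro δ; simp only [hh, hg, shiftCorr_neg]
  -- rewrite circImbalance3 in terms of h
  have himb : circImbalance3 σ =
      ∑ p ∈ Finset.univ.filter (fun p : ZMod n × ZMod n => p.1.val < p.2.val),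
        h (p.1 - p.2) := by
    unfold circImbalance3
    exact Finset.sum_congr rfl fun p _ => by rw [circDist_eq]
  -- the three pair sets
  set A := Finset.univ.filter (fun p : ZMod n × ZMod n => p.1.val < p.2.val) with hA
  set B := Finset.univ.filter (fun p : ZMod n × ZMod n => p.2.val < p.1.val) with hB
  set C := Finset.univ.filter (fun p : ZMod n × ZMod n => p.1 ≠ p.2) with hC
  have hBA : ∑ p ∈ B, h (p.1 - p.2) = ∑ p ∈ A, h (p.1 - p.2) := by
    refine Finset.sum_nbij' (fun p => (p.2, p.1)) (fun p => (p.2, p.1)) ?_ ?_ ?_ ?_ ?_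
    · intro p hp; simp only [hB, Finset.mem_filter] at hp
      simp [hA, hp.2]
    · intro p hp; simp only [hA, Finset.mem_filter] at hp
      simp [hB, hp.2]
    · intro p _; rfl
    · intro p _; rfl
    · intro p _
      rw [← hsymm]; congr 1; ring
  have hval_inj : Function.Injective (ZMod.val (n := n)) := by
    intro a b hab
    have := congrArg (fun m : ℕ => (m : ZMod n)) hab
    simpa [ZMod.natCast_zmod_val] using this
  have hCsplit : ∑ p ∈ C, h (p.1 - p.2) =
      ∑ p ∈ A, h (p.1 - p.2) + ∑ p ∈ B, h (p.1 - p.2) := by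
    rw [← Finset.sum_filter_add_sum_filter_not C (fun p => p.1.val < p.2.val)]
    congr 1
    · congr 1
      rw [hC, hA, Finset.filter_filter]
      refine Finset.filter_congr fun p _ => ?_
      constructor
      · exact fun hp => hp.2
      · intro hp; exact ⟨fun he => by simp [he] at hp, hp⟩
    · congr 1
      rw [hC, hB, Finset.filter_filter]
      refine Finset.filter_congr fun p _ => ?_
      constructor
      · rintro ⟨hne, hnlt⟩
        rcases lt_trichotomy p.2.val p.1.val with hlt | heq | hgt
        · exact hlt
        · exact absurd (hval_inj heq).symm hne
        · exact absurd hgt hnlt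
      · intro hp; exact ⟨fun he => by simp [he] at hp, by omega⟩
  -- nested sum computation
  set K : ℤ := ∑ δ : ZMod n, (if δ ≠ 0 then h δ else 0) with hK
  have hCnested : ∑ p ∈ C, h (p.1 - p.2) = (n : ℤ) * K := by
    rw [hC, Finset.sum_filter, Fintype.sum_prod_type]
    have inner : ∀ x : ZMod n,
        (∑ y : ZMod n, if x ≠ y then h (x - y) else 0) = K := by
      intro x
      rw [hK]
      refine (Fintype.sum_equiv (Equiv.subLeft x) _ _ fun δ => ?_).symm
      by_cases hδ : δ = 0
      · subst hδ; simp
      · have hcond : x ≠ Equiv.subLeft x δ := by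
          simp only [Equiv.subLeft_apply]
          intro hcontra
          exact hδ (sub_eq_self.mp hcontra.symm)
        rw [if_pos hδ, if_pos hcond]
        congr 1
        simp [Equiv.subLeft_apply]
    rw [Finset.sum_congr rfl fun x _ => inner x]
    simp [Finset.card_univ, mul_comm]
  -- compute 3 * K
  have hg0 : g 0 = 0 := shiftCorr_zero σ
  have h3K : 3 * K = 8 * (N - 1) := by
    have e1 : 3 * K = ∑ δ : ZMod n, (if δ ≠ 0 then 3 * h δ else 0) := by
      rw [hK, Finset.mul_sum]
      exact Finset.sum_congr rfl fun δ _ => by split <;> ring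
    rw [e1]
    have e2 : ∀ δ : ZMod n, (if δ ≠ 0 then 3 * h δ else 0)
        = 3 * g δ - (if δ ≠ 0 then N * (N + 1) - 8 else 0) := by
      intro δ
      by_cases hδ : δ = 0
      · subst hδ; simp [hg0]
      · rw [if_pos hδ, if_pos hδ, key δ hδ]; ring
    rw [Finset.sum_congr rfl fun δ _ => e2 δ, Finset.sum_sub_distrib, ← Finset.mul_sum]
    have e3 : (∑ δ : ZMod n, (if δ ≠ 0 then N * (N + 1) - 8 else 0))
        = (N - 1) * (N * (N + 1) - 8) := by
      have : ∀ δ : ZMod n, (if δ ≠ 0 then N * (N + 1) - 8 else 0)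
          = (N * (N + 1) - 8) - (if δ = 0 then N * (N + 1) - 8 else 0) := by
        intro δ; by_cases hδ : δ = 0 <;> simp [hδ]
      rw [Finset.sum_congr rfl fun δ _ => this δ, Finset.sum_sub_distrib,
        Finset.sum_const, Finset.card_univ, ZMod.card, Finset.sum_ite_eq' Finset.univ 0]
      simp [hN]
      ring
    rw [e3]
    have ht := total_sum σ
    rw [hN]
    push_cast
    push_cast at ht
    linear_combination ht
  -- put it together
  have h2X : 2 * circImbalance3 σ = ∑ p ∈ C, h (p.1 - p.2) := by
    rw [hCsplit, hBA, himb]; ring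
  have h6X : 6 * circImbalance3 σ = N * (8 * (N - 1)) := by
    calc 6 * circImbalance3 σ = 3 * (2 * circImbalance3 σ) := by ring
    _ = 3 * ((n : ℤ) * K) := by rw [h2X, hCnested]
    _ = N * (3 * K) := by rw [hN]; ring
    _ = N * (8 * (N - 1)) := by rw [h3K]
  linarith
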